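/- For every real a ≠ 0, shift τ_p, and all τ ≠ τ_p, the function Φ(τ) = a·coth(a(τ - τ_p)/2) satisfies the ODE Φ''' + Φ·Φ'' + (Φ')² = 0 (the case m = 1/2), and this solution blows up as τ → τ_p. -/

import Mathlib

open Real Filter

private lemma alg1 (a s c : ℝ) (hs : s ≠ 0) (hcs : c^2 - s^2 = 1) :
    a * ((s*(a/2)*s - c*(c*(a/2)))/s^2) = -(a^2/2)/s^2 := by
  field_simp
  nlinarith [hcs]

private lemma alg2 (a s c : ℝ) (hs : s ≠ 0) :
    ((0:ℝ)*s^2 - (-(a^2/2))*(2*s*(c*(a/2))))/(s^2)^2 = (a^3/2)*c/s^3 := by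
  field_simp
  ring

private lemma alg3 (a s c : ℝ) (hs : s ≠ 0) :
    (a^3/2*(s*(a/2))*s^3 - a^3/2*c*(3*s^2*(c*(a/2))))/(s^3)^2
      = (a^4/4)*(s^2 - 3*c^2)/s^4 := by
  field_simp
  ring

private lemma alg4 (a s c : ℝ) (hs : s ≠ 0) (hcs : c^2 - s^2 = 1) :
    (a^4/4)*(s^2 - 3*c^2)/s^4 + a*(c/s)*((a^3/2)*c/s^3) + (-(a^2/2)/s^2)^2 = 0 := by
  have h : (a^4/4)*(s^2 - 3*c^2)/s^4 + a*(c/s)*((a^3/2)*c/s^3) + (-(a^2/2)/s^2)^2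
      = (a^4/4)*(s^2 - c^2 + 1)/s^4 := by field_simp; ring
  rw [h, (by linarith : s^2 - c^2 + 1 = 0)]
  simp

theorem coth_solves_m_half_ode_and_blows_up (a τp : ℝ) (ha : a ≠ 0) :
    let Φ : ℝ → ℝ := fun t =>
      a * (Real.cosh (a * (t - τp) / 2) / Real.sinh (a * (t - τp) / 2))
    (∀ τ : ℝ, τ ≠ τp →
      deriv (deriv (deriv Φ)) τ + Φ τ * deriv (deriv Φ) τ + (deriv Φ τ) ^ 2 = 0) ∧
    Filter.Tendsto (fun τ => |Φ τ|) (nhdsWithin τp {τp}ᶜ) Filter.atTop := by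
  intro Φ
  set u : ℝ → ℝ := fun t => a * (t - τp) / 2 with hu_def
  set Φ1 : ℝ → ℝ := fun t => -(a^2/2) / (Real.sinh (u t))^2 with hΦ1_def
  set Φ2 : ℝ → ℝ := fun t => (a^3/2) * Real.cosh (u t) / (Real.sinh (u t))^3 with hΦ2_def
  set Φ3 : ℝ → ℝ := fun t => (a^4/4) * ((Real.sinh (u t))^2 - 3*(Real.cosh (u t))^2) / (Real.sinh (u t))^4 with hΦ3_def
  have hune : ∀ {τ : ℝ}, τ ≠ τp → Real.sinh (u τ) ≠ 0 := by
    intro τ hτ h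
    have h2 := Real.sinh_eq_zero.1 h
    simp only [hu_def] at h2
    rcases mul_eq_zero.1 (by linarith : a * (τ - τp) = 0) with h3 | h3
    · exact ha h3
    · exact hτ (by linarith)
  have hu' : ∀ τ : ℝ, HasDerivAt u (a/2) τ := by
    intro τ
    have : HasDerivAt (fun t : ℝ => a * (t - τp) / 2) (a * 1 / 2) τ :=
      (((hasDerivAt_id τ).sub_const τp).const_mul a).div_const 2
    simpa using this
  have hS : ∀ τ : ℝ, HasDerivAt (fun t => Real.sinh (u t)) (Real.cosh (u τ) * (a/2)) τ :=
    fun τ => (Real.hasDerivAt_sinh (u τ)).comp τ (hu' τ)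
  have hC : ∀ τ : ℝ, HasDerivAt (fun t => Real.cosh (u t)) (Real.sinh (u τ) * (a/2)) τ :=
    fun τ => (Real.hasDerivAt_cosh (u τ)).comp τ (hu' τ)
  have cs : ∀ x : ℝ, Real.cosh x ^ 2 - Real.sinh x ^ 2 = 1 := fun x => Real.cosh_sq_sub_sinh_sq x
  have hDΦ : ∀ τ : ℝ, τ ≠ τp → HasDerivAt Φ (Φ1 τ) τ := by
    intro τ hτ
    have hs := hune hτ
    have h := (((hC τ).div (hS τ) hs).const_mul a)
    rwa [alg1 a _ _ hs (cs (u τ))] at h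
  have hDΦ1 : ∀ τ : ℝ, τ ≠ τp → HasDerivAt Φ1 (Φ2 τ) τ := by
    intro τ hτ
    have hs := hune hτ
    have hpow : HasDerivAt (fun t => (Real.sinh (u t))^2)
        (2 * Real.sinh (u τ) * (Real.cosh (u τ) * (a/2))) τ := by
      simpa [pow_succ, mul_comm, mul_assoc] using ((hS τ).fun_pow 2)
    have h := (hasDerivAt_const τ (-(a^2/2))).div hpow (by positivity)
    rwa [alg2 a _ _ hs] at h
  have hDΦ2 : ∀ τ : ℝ, τ ≠ τp → HasDerivAt Φ2 (Φ3 τ) τ := by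
    intro τ hτ
    have hs := hune hτ
    have hpow : HasDerivAt (fun t => (Real.sinh (u t))^3)
        (3 * (Real.sinh (u τ))^2 * (Real.cosh (u τ) * (a/2))) τ := by
      simpa [mul_comm, mul_assoc] using ((hS τ).fun_pow 3)
    have h := (((hC τ).const_mul (a^3/2)).div hpow (by positivity))
    rwa [alg3 a _ _ hs] at h
  have hopen : IsOpen {t : ℝ | t ≠ τp} := isOpen_compl_singleton
  have hev1 : ∀ τ : ℝ, τ ≠ τp → deriv Φ =ᶠ[nhds τ] Φ1 := by
    intro τ hτ
    filter_upwards [hopen.mem_nhds hτ] with t ht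
    exact (hDΦ t ht).deriv
  have hd2 : ∀ τ : ℝ, τ ≠ τp → deriv (deriv Φ) τ = Φ2 τ := by
    intro τ hτ
    rw [(hev1 τ hτ).deriv_eq]
    exact (hDΦ1 τ hτ).deriv
  have hd3 : ∀ τ : ℝ, τ ≠ τp → deriv (deriv (deriv Φ)) τ = Φ3 τ := by
    intro τ hτ
    have hev2 : deriv (deriv Φ) =ᶠ[nhds τ] Φ2 := by
      filter_upwards [hopen.mem_nhds hτ] with t ht
      exact hd2 t ht
    rw [hev2.deriv_eq]
    exact (hDΦ2 τ hτ).deriv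
  constructor
  · intro τ hτ
    rw [hd3 τ hτ, hd2 τ hτ, (hDΦ τ hτ).deriv]
    exact alg4 a _ _ (hune hτ) (cs (u τ))
  · have hlb : (fun τ => |a| * |Real.sinh (u τ)|⁻¹) ≤ᶠ[nhdsWithin τp {τp}ᶜ]
        (fun τ => |Φ τ|) := by
      filter_upwards [self_mem_nhdsWithin] with τ hτ
      have hτ : τ ≠ τp := hτ
      have hs := hune hτ
      have h1 : (1:ℝ) ≤ Real.cosh (u τ) := Real.one_le_cosh _
      have habs : |Φ τ| = |a| * (Real.cosh (u τ) * |Real.sinh (u τ)|⁻¹) := by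
        show |a * (Real.cosh (u τ) / Real.sinh (u τ))| = _
        rw [abs_mul, abs_div, abs_of_pos (Real.cosh_pos (x := u τ)), div_eq_mul_inv]
      rw [habs]
      calc |a| * |Real.sinh (u τ)|⁻¹ = |a| * (1 * |Real.sinh (u τ)|⁻¹) := by ring
        _ ≤ |a| * (Real.cosh (u τ) * |Real.sinh (u τ)|⁻¹) :=
            mul_le_mul_of_nonneg_left
              (mul_le_mul_of_nonneg_right h1 (by positivity)) (abs_nonneg a)
    refine tendsto_atTop_mono' _ hlb ?_
    have h0 : Tendsto (fun τ => |Real.sinh (u τ)|) (nhdsWithin τp {τp}ᶜ)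
        (nhdsWithin 0 (Set.Ioi 0)) := by
      apply tendsto_nhdsWithin_iff.2
      constructor
      · have hcont : Continuous (fun τ => |Real.sinh (u τ)|) :=
          continuous_abs.comp (Real.continuous_sinh.comp
            ((continuous_const.mul (continuous_id.sub continuous_const)).div_const 2))
        have h2 : Tendsto (fun τ => |Real.sinh (u τ)|) (nhdsWithin τp {τp}ᶜ) (nhds |Real.sinh (u τp)|) :=
          (hcont.tendsto τp).mono_left nhdsWithin_le_nhds
        simpa [hu_def] using h2
      · filter_upwards [self_mem_nhdsWithin] with τ hτ
        exact abs_pos.2 (hune hτ)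
    exact Tendsto.const_mul_atTop (abs_pos.2 ha) (tendsto_inv_nhdsGT_zero.comp h0)
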